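/- Let p be a prime, e ≥ 1 an integer, q = p^e, and A any l×l integer matrix. Then the set of row vectors t ∈ (ℚ/ℤ)^l with t·(q·A) = t (equivalently t·(q·A − I) = 0) is finite of cardinality |det(q·A − I)|, this cardinality is coprime to p, and every such t has finite additive order coprime to p, i.e., all solutions lie in (ℚ_{p'}/ℤ)^l. -/
import Mathlib

open Matrix

lemma index_range_toLin' {l : ℕ} (M : Matrix (Fin l) (Fin l) ℤ) (hM : M.det ≠ 0) :
    (LinearMap.range (Matrix.toLin' M)).toAddSubgroup.index = M.det.natAbs := by
  classical
  set N := LinearMap.range (Matrix.toLin' M) with hN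
  have hinj : Function.Injective (Matrix.toLin' M) := by
    intro v w hvw
    have h0 : M *ᵥ (v - w) = 0 := by
      have : M *ᵥ v = M *ᵥ w := by simpa [Matrix.toLin'_apply] using hvw
      simp [Matrix.mulVec_sub, this]
    have h1 : M.det • (v - w) = 0 := by
      have := congrArg (fun x => M.adjugate *ᵥ x) h0
      simpa [Matrix.mulVec_mulVec, Matrix.adjugate_mul, Matrix.smul_mulVec,
        Matrix.one_mulVec] using this
    have h2 : v - w = 0 := by
      funext i
      have := congrFun h1 i
      simpa [hM, sub_eq_zero] using this
    exact sub_eq_zero.mp h2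
  set e0 : (Fin l → ℤ) ≃ₗ[ℤ] N := LinearEquiv.ofInjective _ hinj with he0
  have hind : N.toAddSubgroup.index ≠ 0 :=
    Int.submodule_toAddSubgroup_index_ne_zero_iff.mpr ⟨e0.symm⟩
  obtain ⟨n, snf⟩ := N.smithNormalForm (Pi.basisFun ℤ (Fin l))
  have hn : n = l := by
    have := snf.toAddSubgroup_index_ne_zero_iff.mp hind
    simpa using this
  subst hn
  -- index = ∏ |a i|
  have hindex : N.toAddSubgroup.index = ∏ i, (snf.a i).natAbs := by
    rw [snf.toAddSubgroup_index_eq_ite]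
    simp [Ideal.span_singleton_toAddSubgroup_eq_zmultiples, Int.index_zmultiples]
  -- determinant computation
  have hbij : Function.Bijective snf.f :=
    (Finite.injective_iff_bijective).mp snf.f.injective
  set σ : Fin n ≃ Fin n := Equiv.ofBijective _ hbij with hσ
  set e : (Fin n → ℤ) ≃ₗ[ℤ] N := snf.bM.equiv snf.bN σ.symm with he
  have hga : ∀ i, (N.subtype ∘ₗ (e : (Fin n → ℤ) →ₗ[ℤ] N)) (snf.bM i)
      = snf.a (σ.symm i) • snf.bM i := by
    intro i
    have h1 : e (snf.bM i) = snf.bN (σ.symm i) := snf.bM.equiv_apply _ _ _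
    have h2 : (snf.bN (σ.symm i) : Fin n → ℤ) = snf.a (σ.symm i) • snf.bM (snf.f (σ.symm i)) :=
      snf.snf _
    have h3 : snf.f (σ.symm i) = i := σ.apply_symm_apply i
    simp only [LinearMap.comp_apply, LinearEquiv.coe_coe, Submodule.subtype_apply, h1, h2, h3]
  have hmat : LinearMap.toMatrix snf.bM snf.bM (N.subtype ∘ₗ (e : (Fin n → ℤ) →ₗ[ℤ] N))
      = Matrix.diagonal (fun i => snf.a (σ.symm i)) := by
    ext i j
    rw [LinearMap.toMatrix_apply, hga j, _root_.map_smul, Module.Basis.repr_self,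
      Finsupp.smul_apply, Finsupp.single_apply]
    by_cases h : i = j
    · subst h; simp
    · simp [Matrix.diagonal_apply_ne _ h, Ne.symm h]
  have hdet1 : (LinearMap.det (N.subtype ∘ₗ (e : (Fin n → ℤ) →ₗ[ℤ] N))).natAbs
      = ∏ i, (snf.a i).natAbs := by
    rw [← LinearMap.det_toMatrix snf.bM, hmat, Matrix.det_diagonal]
    rw [← Equiv.prod_comp σ.symm (fun i => (snf.a i).natAbs)]
    exact map_prod Int.natAbsHom _ _
  have hcomp : Matrix.toLin' M = N.subtype ∘ₗ ((e0 : (Fin n → ℤ) →ₗ[ℤ] N)) := by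
    refine LinearMap.ext fun v => ?_
    rw [LinearMap.comp_apply, LinearEquiv.coe_coe, he0, Submodule.subtype_apply,
      LinearEquiv.ofInjective_apply, Matrix.toLin'_apply]
  have hassoc : Associated (LinearMap.det (N.subtype ∘ₗ ((e0 : (Fin n → ℤ) →ₗ[ℤ] N))))
      (LinearMap.det (N.subtype ∘ₗ (e : (Fin n → ℤ) →ₗ[ℤ] N))) :=
    LinearMap.associated_det_comp_equiv _ _ _
  have : M.det.natAbs = ∏ i, (snf.a i).natAbs := by
    rw [← LinearMap.det_toLin' M, hcomp, Int.natAbs_eq_iff_associated.mpr hassoc, hdet1]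
  rw [hindex, this]

/-- Let `p` be a prime, `q = p^e` with `e ≥ 1`, and `A` any `l × l` integer
matrix.  The set of row vectors `t ∈ (ℚ/ℤ)^l` with `t · (q A) = t`
(equivalently `t · (q A - I) = 0`) is finite of cardinality
`|det (q A - I)|`, this cardinality is coprime to `p`, and every solution `t`
has all components of finite additive order coprime to `p`, i.e. all
solutions lie in `(ℚ_{p'}/ℤ)^l`. -/
theorem fixedPoints_qA_finite_coprime
    {l : ℕ} (p : ℕ) (hp : p.Prime) (e : ℕ) (he : 1 ≤ e) (q : ℕ) (hq : q = p ^ e)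
    (A : Matrix (Fin l) (Fin l) ℤ)
    (S : Set (Fin l → AddCircle (1 : ℚ)))
    (hS : S = {t | ∀ j, ∑ i, ((q : ℤ) * A i j) • t i = t j}) :
    S.Finite ∧
    Nat.card S = ((q : ℤ) • A - 1).det.natAbs ∧
    Nat.Coprime ((q : ℤ) • A - 1).det.natAbs p ∧
    ∀ t ∈ S, ∀ i : Fin l, 0 < addOrderOf (t i) ∧ (addOrderOf (t i)).Coprime p := by
  classical
  haveI := Fact.mk hp
  set M : Matrix (Fin l) (Fin l) ℤ := (q : ℤ) • A - 1 with hM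
  set π : ℚ →+ AddCircle (1 : ℚ) :=
    QuotientAddGroup.mk' (AddSubgroup.zmultiples (1 : ℚ)) with hπdef
  have hπint : ∀ m : ℤ, π (m : ℚ) = 0 := by
    intro m
    rw [hπdef, QuotientAddGroup.mk'_apply, QuotientAddGroup.eq_zero_iff]
    exact ⟨m, by simp⟩
  have hπsurj : ∀ x : AddCircle (1 : ℚ), ∃ r : ℚ, π r = x :=
    QuotientAddGroup.mk'_surjective _
  have hπzero : ∀ r : ℚ, π r = 0 → ∃ m : ℤ, (m : ℚ) = r := by
    intro r hr
    rw [hπdef, QuotientAddGroup.mk'_apply, QuotientAddGroup.eq_zero_iff] at hr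
    obtain ⟨m, hm⟩ := hr
    exact ⟨m, by simpa using hm⟩
  have hπsmul : ∀ (z : ℤ) (r : ℚ), z • π r = π ((z : ℚ) * r) := by
    intro z r
    rw [← map_zsmul π, zsmul_eq_mul]
  -- rewrite S
  have hS' : S = {t | ∀ j, ∑ i, M i j • t i = 0} := by
    rw [hS]
    ext t
    simp only [Set.mem_setOf_eq]
    have key : ∀ j, ∑ i, M i j • t i = (∑ i, ((q : ℤ) * A i j) • t i) - t j := by
      intro j
      have h1 : ∀ i, M i j • t i
          = ((q : ℤ) * A i j) • t i - ((1 : Matrix (Fin l) (Fin l) ℤ) i j) • t i := by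
        intro i
        rw [hM, Matrix.sub_apply, Matrix.smul_apply, smul_eq_mul, sub_smul]
      rw [Finset.sum_congr rfl fun i _ => h1 i, Finset.sum_sub_distrib]
      congr 1
      simp [Matrix.one_apply, ite_smul]
    constructor
    · intro h j; rw [key j, h j, sub_self]
    · intro h j
      have := key j
      rw [h j, eq_comm, sub_eq_zero] at this
      exact this
  -- coprimality of det with p
  have hq0 : ((q : ℤ) : ZMod p) = 0 := by
    rw [hq]
    push_cast
    rw [ZMod.natCast_self]
    exact zero_pow (by omega)
  have hcast : M.map ((Int.castRingHom (ZMod p)) : ℤ → ZMod p) = -1 := by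
    ext i j
    rw [Matrix.map_apply, Matrix.neg_apply, hM, Matrix.sub_apply, Matrix.smul_apply,
      smul_eq_mul, map_sub, _root_.map_mul]
    have hq0' : ((Int.castRingHom (ZMod p)) ((q : ℤ))) = 0 := by
      simpa using hq0
    rw [hq0', zero_mul, zero_sub]
    by_cases h : i = j <;> simp [Matrix.one_apply, h]
  have hdetcast : ((M.det : ℤ) : ZMod p) = (-1) ^ l := by
    have h := RingHom.map_det (Int.castRingHom (ZMod p)) M
    rw [RingHom.mapMatrix_apply, hcast] at h
    simpa [Matrix.det_neg] using h
  have hdetne : ((M.det : ℤ) : ZMod p) ≠ 0 := by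
    rw [hdetcast]
    exact pow_ne_zero _ (neg_ne_zero.mpr one_ne_zero)
  have hcop : Nat.Coprime M.det.natAbs p := by
    refine Nat.Coprime.symm (hp.coprime_iff_not_dvd.mpr ?_)
    intro hdvd
    have h1 : (p : ℤ) ∣ M.det := by
      rwa [← Int.natAbs_dvd_natAbs, Int.natAbs_natCast]
    exact hdetne ((ZMod.intCast_zmod_eq_zero_iff_dvd _ _).mpr h1)
  have hd0 : M.det ≠ 0 := by
    intro h
    rw [h] at hcop
    simp only [Int.natAbs_zero] at hcop
    exact hp.one_lt.ne' (Nat.coprime_zero_left p |>.mp hcop)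
  have hdabs0 : M.det.natAbs ≠ 0 := Int.natAbs_ne_zero.mpr hd0
  -- adjugate kills solutions
  have hkill : ∀ t ∈ S, ∀ k, M.det • t k = 0 := by
    rw [hS']
    intro t ht k
    have hsum1 : ∑ i, ((M * M.adjugate) i k) • t i = M.det • t k := by
      rw [Matrix.mul_adjugate]
      simp [Matrix.smul_apply, Matrix.one_apply, smul_eq_mul, mul_ite, mul_one, mul_zero,
        ite_smul]
    have hsum2 : ∑ i, ((M * M.adjugate) i k) • t i = 0 := by
      simp_rw [Matrix.mul_apply, Finset.sum_smul]
      rw [Finset.sum_comm]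
      have h3 : ∀ j, ∑ i, (M i j * M.adjugate j k) • t i
          = M.adjugate j k • ∑ i, M i j • t i := by
        intro j
        rw [Finset.smul_sum]
        exact Finset.sum_congr rfl fun i _ => by rw [smul_smul, mul_comm]
      rw [Finset.sum_congr rfl fun j _ => h3 j]
      have h4 : ∀ j, M.adjugate j k • ∑ i, M i j • t i = 0 := fun j => by
        rw [ht j, smul_zero]
      rw [Finset.sum_congr rfl fun j _ => h4 j, Finset.sum_const_zero]
    rw [← hsum1, hsum2]
  -- order facts
  have horder : ∀ t ∈ S, ∀ i : Fin l, addOrderOf (t i) ∣ M.det.natAbs := by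
    intro t ht i
    refine addOrderOf_dvd_of_nsmul_eq_zero ?_
    have h1 : (M.det.natAbs : ℤ) • t i = 0 := by
      rcases Int.natAbs_eq M.det with h | h
      · rw [← h]; exact hkill t ht i
      · have : (M.det.natAbs : ℤ) = -M.det := by omega
        rw [this, neg_smul, hkill t ht i, neg_zero]
    rw [← natCast_zsmul]
    exact h1
  -- the homomorphism ψ
  set Mq : Matrix (Fin l) (Fin l) ℚ := M.map ((Int.castRingHom ℚ) : ℤ → ℚ) with hMq
  have hMqdet : Mq.det = (M.det : ℚ) := (RingHom.map_det (Int.castRingHom ℚ) M).symm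
  have hMqunit : IsUnit Mq.det := by
    rw [hMqdet, isUnit_iff_ne_zero]
    exact_mod_cast Int.cast_ne_zero.mpr hd0
  have hinv1 : Mq⁻¹ * Mq = 1 := Matrix.nonsing_inv_mul _ hMqunit
  have hinv2 : Mq * Mq⁻¹ = 1 := Matrix.mul_nonsing_inv _ hMqunit
  have hcastvm : ∀ (w : Fin l → ℤ) (j : Fin l),
      (((w ᵥ* M) j : ℤ) : ℚ) = ((fun i => ((w i : ℚ))) ᵥ* Mq) j := by
    intro w j
    simp only [Matrix.vecMul, dotProduct, hMq, Matrix.map_apply]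
    push_cast
    rfl
  set ψ : (Fin l → ℤ) →+ (Fin l → AddCircle (1 : ℚ)) :=
    { toFun := fun v k => π (((fun j => ((v j : ℚ))) ᵥ* Mq⁻¹) k)
      map_zero' := by
        funext k
        show π (((fun j => (((0 : Fin l → ℤ) j : ℚ))) ᵥ* Mq⁻¹) k) = 0
        have h0 : (fun j => (((0 : Fin l → ℤ) j : ℚ))) = (0 : Fin l → ℚ) := by
          funext j; simp
        rw [h0, Matrix.zero_vecMul]
        simp
      map_add' := by
        intro v w
        funext k
        show π (((fun j => (((v + w) j : ℚ))) ᵥ* Mq⁻¹) k)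
            = π (((fun j => ((v j : ℚ))) ᵥ* Mq⁻¹) k) + π (((fun j => ((w j : ℚ))) ᵥ* Mq⁻¹) k)
        have h0 : (fun j => (((v + w) j : ℚ)))
            = (fun j => ((v j : ℚ))) + (fun j => ((w j : ℚ))) := by
          funext j; simp
        rw [h0, Matrix.add_vecMul, Pi.add_apply, map_add] } with hψdef
  have hψapp : ∀ (v : Fin l → ℤ) (k : Fin l),
      ψ v k = π (((fun j => ((v j : ℚ))) ᵥ* Mq⁻¹) k) := fun v k => rfl
  -- ψ lands in S
  have hψS : ∀ v, ψ v ∈ S := by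
    intro v
    rw [hS']
    intro j
    have hMqe : ∀ a b, Mq a b = ((M a b : ℚ)) := fun a b => by
      simp [hMq, Matrix.map_apply]
    have h1 : ∀ i, M i j • ψ v i
        = π (Mq i j * (((fun j => ((v j : ℚ))) ᵥ* Mq⁻¹) i)) := by
      intro i
      rw [hψapp, hπsmul, hMqe]
    rw [Finset.sum_congr rfl fun i _ => h1 i, ← map_sum]
    have h2 : ∑ i, Mq i j * (((fun j => ((v j : ℚ))) ᵥ* Mq⁻¹) i)
        = (((fun j => ((v j : ℚ))) ᵥ* Mq⁻¹) ᵥ* Mq) j := by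
      simp [Matrix.vecMul, dotProduct, mul_comm]
    rw [h2, Matrix.vecMul_vecMul, hinv1, Matrix.vecMul_one]
    exact hπint (v j)
  -- range of ψ is S
  have hrange : Set.range ψ = S := by
    apply Set.eq_of_subset_of_subset
    · rintro x ⟨v, rfl⟩; exact hψS v
    · intro t ht
      choose r hr using fun i => hπsurj (t i)
      have hint : ∀ j, π ((r ᵥ* Mq) j) = 0 := by
        intro j
        have h1 : (r ᵥ* Mq) j = ∑ i, (M i j : ℚ) * r i := by
          simp [Matrix.vecMul, dotProduct, hMq, Matrix.map_apply, mul_comm]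
        rw [h1, map_sum]
        have h2 : ∀ i, π ((M i j : ℚ) * r i) = M i j • t i := by
          intro i
          rw [← hπsmul, hr]
        rw [Finset.sum_congr rfl fun i _ => h2 i]
        rw [hS'] at ht
        exact ht j
      choose n hn using fun j => hπzero _ (hint j)
      refine ⟨n, ?_⟩
      funext k
      rw [hψapp]
      have h3 : (fun j => ((n j : ℚ))) = r ᵥ* Mq := by
        funext j; exact hn j
      rw [h3, Matrix.vecMul_vecMul, hinv2, Matrix.vecMul_one, hr]
  -- kernel of ψ
  have hker : ψ.ker = (LinearMap.range (Matrix.toLin' Mᵀ)).toAddSubgroup := by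
    ext v
    rw [AddMonoidHom.mem_ker, Submodule.mem_toAddSubgroup, LinearMap.mem_range]
    constructor
    · intro hv
      have hv' : ∀ k, π (((fun j => ((v j : ℚ))) ᵥ* Mq⁻¹) k) = 0 :=
        fun k => congrFun hv k
      choose w hw using fun k => hπzero _ (hv' k)
      refine ⟨w, ?_⟩
      rw [Matrix.toLin'_apply, Matrix.mulVec_transpose]
      funext j
      have h1 : (((w ᵥ* M) j : ℤ) : ℚ) = ((v j : ℤ) : ℚ) := by
        rw [hcastvm]
        have h2 : (fun i => ((w i : ℚ))) = (fun j => ((v j : ℚ))) ᵥ* Mq⁻¹ := by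
          funext i; exact hw i
        rw [h2, Matrix.vecMul_vecMul, hinv1, Matrix.vecMul_one]
      exact_mod_cast h1
    · rintro ⟨w, rfl⟩
      rw [Matrix.toLin'_apply]
      have h1 : (fun j => (((Mᵀ *ᵥ w) j : ℤ) : ℚ)) = (fun i => ((w i : ℚ))) ᵥ* Mq := by
        funext j
        rw [Matrix.mulVec_transpose]
        exact hcastvm w j
      funext k
      rw [hψapp, h1, Matrix.vecMul_vecMul, hinv2, Matrix.vecMul_one]
      exact hπint (w k)
  -- cardinality
  have hdetT : Mᵀ.det ≠ 0 := by rwa [Matrix.det_transpose]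
  have hindex : ψ.ker.index = M.det.natAbs := by
    rw [hker, index_range_toLin' Mᵀ hdetT, Matrix.det_transpose]
  have e1 : ((Fin l → ℤ) ⧸ ψ.ker) ≃+ ψ.range := QuotientAddGroup.quotientKerEquivRange ψ
  have hSeq : S = (ψ.range : Set (Fin l → AddCircle (1 : ℚ))) := by
    rw [AddMonoidHom.coe_range, hrange]
  have hcardq : Nat.card ((Fin l → ℤ) ⧸ ψ.ker) = M.det.natAbs := hindex
  have hcardS : Nat.card S = M.det.natAbs := by
    rw [← hcardq]
    refine Nat.card_congr ?_
    refine (Equiv.setCongr hSeq).trans ?_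
    exact e1.toEquiv.symm
  haveI hfinq : Finite ((Fin l → ℤ) ⧸ ψ.ker) :=
    Nat.finite_of_card_ne_zero (by rw [hcardq]; exact hdabs0)
  haveI hfinr : Finite ψ.range := Finite.of_equiv _ e1.toEquiv
  have hfinS : S.Finite := by
    rw [hSeq]
    exact Set.toFinite _
  refine ⟨hfinS, hcardS, hcop, ?_⟩
  intro t ht i
  have hdvd := horder t ht i
  constructor
  · rcases Nat.eq_zero_or_pos (addOrderOf (t i)) with h | h
    · exfalso
      rw [h] at hdvd
      exact hdabs0 (Nat.eq_zero_of_zero_dvd hdvd)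
    · exact h
  · exact Nat.Coprime.coprime_dvd_left hdvd hcop
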